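/- Let A ⊂ B ⊂ Q_1 be Lebesgue measurable sets, let δ₁, δ₂ ∈ (0,1) and L ∈ ℕ. Suppose: (1) |A| ≤ δ₁; (2) whenever Q ∈ 𝒟_ℓ for some ℓ ≤ L satisfies |A ∩ Q| > δ₁|Q|, then pre(Q) ⊂ B; (3) whenever Q ∈ 𝒟_L satisfies |A ∩ Q| > δ₂|Q|, then Q ⊂ B. Then |A| ≤ δ₁|B| + δ₂. -/

import Mathlib

open MeasureTheory

/-- The open dyadic subcube of the unit cube `Q_1 = (−1/2, 1/2)^N` of generation `ℓ`
with index `k : Fin N → ℕ` (where `k i < 2^ℓ`): in coordinate `i` it is the interval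
`(−1/2 + k i·2^{−ℓ}, −1/2 + (k i + 1)·2^{−ℓ})`.  For `ℓ = 0`, `k = 0`, this is `Q_1`
itself; the dyadic predecessor of the cube with index `(ℓ, k)` is the cube with index
`(ℓ − 1, fun i => k i / 2)`. -/
def dyadicCube {N : ℕ} (ℓ : ℕ) (k : Fin N → ℕ) : Set (EuclideanSpace ℝ (Fin N)) :=
  {y | ∀ i, -(1 / 2) + (k i : ℝ) / 2 ^ ℓ < y i ∧ y i < -(1 / 2) + ((k i : ℝ) + 1) / 2 ^ ℓ}

lemma dyadicCube_eq_pi {N : ℕ} (ℓ : ℕ) (k : Fin N → ℕ) :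
    dyadicCube ℓ k = (MeasurableEquiv.toLp 2 (Fin N → ℝ)).symm ⁻¹'
      (Set.univ.pi fun i => Set.Ioo (-(1/2) + (k i : ℝ)/2^ℓ) (-(1/2) + ((k i : ℝ)+1)/2^ℓ)) := by
  ext y
  simp [dyadicCube, Set.mem_pi, MeasurableEquiv.coe_toLp_symm]

lemma measurableSet_dyadicCube {N : ℕ} (ℓ : ℕ) (k : Fin N → ℕ) :
    MeasurableSet (dyadicCube ℓ k) := by
  rw [dyadicCube_eq_pi]
  exact (MeasurableEquiv.toLp 2 (Fin N → ℝ)).symm.measurable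
    (MeasurableSet.univ_pi fun i => measurableSet_Ioo)

lemma volume_dyadicCube {N : ℕ} (ℓ : ℕ) (k : Fin N → ℕ) :
    volume (dyadicCube ℓ k) = (ENNReal.ofReal (((2:ℝ)^ℓ)⁻¹))^N := by
  rw [dyadicCube_eq_pi]
  rw [(EuclideanSpace.volume_preserving_symm_measurableEquiv_toLp (Fin N)).measure_preimage
    ((MeasurableSet.univ_pi fun i => measurableSet_Ioo).nullMeasurableSet)]
  rw [volume_pi_pi]
  have : ∀ i : Fin N, volume (Set.Ioo (-(1/2) + (k i : ℝ)/2^ℓ) (-(1/2) + ((k i : ℝ)+1)/2^ℓ))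
      = ENNReal.ofReal (((2:ℝ)^ℓ)⁻¹) := by
    intro i
    rw [Real.volume_Ioo]
    congr 1
    field_simp; ring
  rw [Finset.prod_congr rfl fun i _ => this i, Finset.prod_const, Finset.card_univ,
    Fintype.card_fin]

lemma dyadic_mem_lt {N ℓ : ℕ} {k k' : Fin N → ℕ} {y : EuclideanSpace ℝ (Fin N)} (i : Fin N)
    (h : y ∈ dyadicCube ℓ k) (h' : y ∈ dyadicCube ℓ k') (hlt : k i < k' i) : False := by
  have h1 := (h i).2
  have h2 := (h' i).1
  have hc : ((k i : ℝ) + 1) ≤ (k' i : ℝ) := by exact_mod_cast hlt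
  have h3 : ((k i : ℝ) + 1) / 2 ^ ℓ ≤ (k' i : ℝ) / 2 ^ ℓ := by gcongr
  linarith

lemma dyadic_eq_of_mem {N ℓ : ℕ} {k k' : Fin N → ℕ} {y : EuclideanSpace ℝ (Fin N)}
    (h : y ∈ dyadicCube ℓ k) (h' : y ∈ dyadicCube ℓ k') : k = k' := by
  funext i
  rcases lt_trichotomy (k i) (k' i) with hlt | he | hlt
  · exact absurd (dyadic_mem_lt i h h' hlt) (by simp)
  · exact he
  · exact absurd (dyadic_mem_lt i h' h hlt) (by simp)

lemma dyadicCube_subset {N : ℕ} {m ℓ : ℕ} (hm : m ≤ ℓ) (k : Fin N → ℕ) :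
    dyadicCube ℓ k ⊆ dyadicCube m (fun i => k i / 2 ^ (ℓ - m)) := by
  intro y hy i
  obtain ⟨hy1, hy2⟩ := hy i
  set d := ℓ - m with hd
  set q := k i / 2 ^ d with hq
  have hde : ℓ = m + d := by omega
  have hpow : (2 : ℝ) ^ ℓ = 2 ^ m * 2 ^ d := by rw [hde, pow_add]
  have hqk : q * 2 ^ d ≤ k i := Nat.div_mul_le_self _ _
  have hk1 : k i + 1 ≤ (q + 1) * 2 ^ d := by
    have hmod : 2 ^ d * q + k i % 2 ^ d = k i := Nat.div_add_mod (k i) (2 ^ d)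
    have hltm : k i % 2 ^ d < 2 ^ d := Nat.mod_lt _ (Nat.pow_pos (n := d) (by norm_num))
    have hexp : (q + 1) * 2 ^ d = 2 ^ d * q + 2 ^ d := by ring
    omega
  have hqkR : (q : ℝ) * 2 ^ d ≤ (k i : ℝ) := by exact_mod_cast hqk
  have hk1R : (k i : ℝ) + 1 ≤ ((q : ℝ) + 1) * 2 ^ d := by exact_mod_cast hk1
  have hpm : (0:ℝ) < 2 ^ m := by positivity
  have hpd : (0:ℝ) < 2 ^ d := by positivity
  constructor
  · have : (q : ℝ) / 2 ^ m ≤ (k i : ℝ) / 2 ^ ℓ := by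
      rw [hpow, div_le_div_iff₀ hpm (by positivity)]
      calc (q:ℝ) * (2^m * 2^d) = (q * 2^d) * 2^m := by ring
        _ ≤ (k i : ℝ) * 2 ^ m := by gcongr
    linarith
  · have : ((k i : ℝ) + 1) / 2 ^ ℓ ≤ ((q:ℝ) + 1) / 2 ^ m := by
      rw [hpow, div_le_div_iff₀ (by positivity) hpm]
      calc ((k i : ℝ) + 1) * 2 ^ m ≤ (((q:ℝ)+1) * 2^d) * 2^m := by gcongr
        _ = ((q:ℝ)+1) * (2^m * 2^d) := by ring
    linarith

def czCross {N : ℕ} (A : Set (EuclideanSpace ℝ (Fin N))) (δ₁ : ℝ) (m : ℕ)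
    (r : Fin N → ℕ) : Prop :=
  ENNReal.ofReal δ₁ * volume (dyadicCube m r) < volume (A ∩ dyadicCube m r)

def czAnc {N : ℕ} (L p : ℕ) (k : Fin N → ℕ) : Fin N → ℕ := fun i => k i / 2 ^ (L - p)

def czStop {N : ℕ} (A : Set (EuclideanSpace ℝ (Fin N))) (δ₁ : ℝ) (L p : ℕ)
    (r : Fin N → ℕ) : Prop :=
  p + 1 ≤ L ∧ ∃ r' : Fin N → ℕ, (∀ i, r' i < 2 ^ (p + 1)) ∧ (fun i => r' i / 2) = r ∧
    czCross A δ₁ (p + 1) r'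

def czBad {N : ℕ} (A : Set (EuclideanSpace ℝ (Fin N))) (δ₁ : ℝ) (L : ℕ)
    (k : Fin N → ℕ) : Prop :=
  ∃ p, czStop A δ₁ L p (czAnc L p k)

open Classical in
noncomputable def czP {N : ℕ} (A : Set (EuclideanSpace ℝ (Fin N))) (δ₁ : ℝ) (L : ℕ)
    (k : Fin N → ℕ) : ℕ :=
  if h : czBad A δ₁ L k then Nat.find h else 0

lemma czP_stop {N : ℕ} {A : Set (EuclideanSpace ℝ (Fin N))} {δ₁ : ℝ} {L : ℕ}
    {k : Fin N → ℕ} (h : czBad A δ₁ L k) :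
    czStop A δ₁ L (czP A δ₁ L k) (czAnc L (czP A δ₁ L k) k) := by
  classical
  rw [czP, dif_pos h]
  exact Nat.find_spec h

lemma czP_le {N : ℕ} {A : Set (EuclideanSpace ℝ (Fin N))} {δ₁ : ℝ} {L : ℕ}
    {k : Fin N → ℕ} (h : czBad A δ₁ L k) {p : ℕ} (hp : czStop A δ₁ L p (czAnc L p k)) :
    czP A δ₁ L k ≤ p := by
  classical
  rw [czP, dif_pos h]
  exact Nat.find_min' h hp

lemma czP_min {N : ℕ} {A : Set (EuclideanSpace ℝ (Fin N))} {δ₁ : ℝ} {L : ℕ}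
    {k : Fin N → ℕ} (h : czBad A δ₁ L k) {q : ℕ} (hq : q < czP A δ₁ L k) :
    ¬ czStop A δ₁ L q (czAnc L q k) := by
  classical
  rw [czP, dif_pos h] at hq
  exact Nat.find_min h hq

lemma czAnc_self {N : ℕ} (L : ℕ) (k : Fin N → ℕ) : czAnc L L k = k := by
  funext i; simp [czAnc]

lemma czAnc_trans {N : ℕ} (L p p' : ℕ) (hpp' : p ≤ p') (hp'L : p' ≤ L) (k : Fin N → ℕ) :
    (fun i => czAnc L p' k i / 2 ^ (p' - p)) = czAnc L p k := by
  funext i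
  simp only [czAnc]
  rw [Nat.div_div_eq_div_mul, ← pow_add]
  congr 2
  omega

/-- **Calderón–Zygmund decomposition.** Let `A ⊆ B ⊆ Q_1` be measurable,
`δ₁, δ₂ ∈ (0,1)` and `L ∈ ℕ`. Suppose: (1) `|A| ≤ δ₁`; (2) whenever a dyadic cube
`Q ∈ 𝒟_ℓ` with `ℓ ≤ L` satisfies `|A ∩ Q| > δ₁|Q|`, then `pre(Q) ⊆ B`; (3) whenever
`Q ∈ 𝒟_L` satisfies `|A ∩ Q| > δ₂|Q|`, then `Q ⊆ B`. Then `|A| ≤ δ₁|B| + δ₂`. -/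
theorem calderon_zygmund (N : ℕ) (hN : 1 ≤ N)
    (A B : Set (EuclideanSpace ℝ (Fin N)))
    (hAB : A ⊆ B) (hBQ : B ⊆ dyadicCube 0 (fun _ => 0))
    (hAmeas : MeasurableSet A) (hBmeas : MeasurableSet B)
    (δ₁ δ₂ : ℝ) (hδ₁ : δ₁ ∈ Set.Ioo (0 : ℝ) 1) (hδ₂ : δ₂ ∈ Set.Ioo (0 : ℝ) 1) (L : ℕ)
    (h1 : volume A ≤ ENNReal.ofReal δ₁)
    (h2 : ∀ ℓ : ℕ, 1 ≤ ℓ → ℓ ≤ L → ∀ k : Fin N → ℕ, (∀ i, k i < 2 ^ ℓ) →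
      ENNReal.ofReal δ₁ * volume (dyadicCube ℓ k) < volume (A ∩ dyadicCube ℓ k) →
      dyadicCube (ℓ - 1) (fun i => k i / 2) ⊆ B)
    (h3 : ∀ k : Fin N → ℕ, (∀ i, k i < 2 ^ L) →
      ENNReal.ofReal δ₂ * volume (dyadicCube L k) < volume (A ∩ dyadicCube L k) →
      dyadicCube L k ⊆ B) :
    volume A ≤ ENNReal.ofReal δ₁ * volume B + ENNReal.ofReal δ₂ := by
  classical
  have hAQ1 : A ⊆ dyadicCube 0 (fun _ : Fin N => 0) := hAB.trans hBQ
  have hQ1vol : volume (dyadicCube 0 (fun _ : Fin N => 0)) = 1 := by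
    rw [volume_dyadicCube]; simp
  set KL : Finset (Fin N → ℕ) := Fintype.piFinset (fun _ : Fin N => Finset.range (2 ^ L))
    with hKLdef
  have hKLmem : ∀ k : Fin N → ℕ, k ∈ KL ↔ ∀ i, k i < 2 ^ L := by
    intro k; simp [hKLdef, Fintype.mem_piFinset]
  have hsubQ1 : ∀ k : Fin N → ℕ, (∀ i, k i < 2 ^ L) →
      dyadicCube L k ⊆ dyadicCube 0 (fun _ : Fin N => 0) := by
    intro k hk
    have h := dyadicCube_subset (Nat.zero_le L) k
    have he : (fun i => k i / 2 ^ (L - 0)) = (fun _ : Fin N => 0) := by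
      funext i; simp only [Nat.sub_zero]; exact Nat.div_eq_of_lt (hk i)
    rwa [he] at h
  have hdisj : ∀ (m : ℕ) (r r' : Fin N → ℕ), r ≠ r' →
      Disjoint (dyadicCube m r) (dyadicCube m r') := by
    intro m r r' hne
    exact Set.disjoint_left.2 fun x hx hx' => hne (dyadic_eq_of_mem hx hx')
  -- total volume of the level-L cubes is 1
  have hsumKL : ∑ k ∈ KL, volume (dyadicCube L k) = 1 := by
    rw [Finset.sum_congr rfl fun k _ => volume_dyadicCube L k, Finset.sum_const]
    have hcard : KL.card = (2 ^ L) ^ N := by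
      rw [hKLdef, Fintype.card_piFinset]
      simp
    have h2e : ENNReal.ofReal (((2:ℝ) ^ L)⁻¹) = ((2 : ENNReal) ^ L)⁻¹ := by
      rw [ENNReal.ofReal_inv_of_pos (by positivity), ENNReal.ofReal_pow (by norm_num)]
      norm_num
    rw [hcard, nsmul_eq_mul, h2e]
    push_cast
    rw [← mul_pow, ENNReal.mul_inv_cancel (by positivity) (ENNReal.pow_ne_top ENNReal.ofNat_ne_top), one_pow]
  -- |A| decomposes along the level-L cubes
  have key : volume A = ∑ k ∈ KL, volume (A ∩ dyadicCube L k) := by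
    have hUmeas : MeasurableSet (⋃ k ∈ KL, dyadicCube L k) :=
      KL.measurableSet_biUnion fun k _ => measurableSet_dyadicCube L k
    have hpd : (KL : Set (Fin N → ℕ)).PairwiseDisjoint (dyadicCube L) :=
      fun a _ b _ hab => hdisj L a b hab
    have hUvol : volume (⋃ k ∈ KL, dyadicCube L k) = 1 := by
      rw [measure_biUnion_finset hpd fun k _ => measurableSet_dyadicCube L k, hsumKL]
    have hUQ1 : (⋃ k ∈ KL, dyadicCube L k) ⊆ dyadicCube 0 (fun _ : Fin N => 0) :=
      Set.iUnion₂_subset fun k hk => hsubQ1 k ((hKLmem k).1 hk)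
    have hnull : volume (dyadicCube 0 (fun _ : Fin N => 0) \ ⋃ k ∈ KL, dyadicCube L k) = 0 := by
      rw [measure_diff hUQ1 hUmeas.nullMeasurableSet (hUvol ▸ ENNReal.one_ne_top), hUvol,
        hQ1vol, tsub_self]
    have hAnull : volume (A \ ⋃ k ∈ KL, dyadicCube L k) = 0 :=
      measure_mono_null (Set.diff_subset_diff_left hAQ1) hnull
    calc volume A
        = volume (A ∩ ⋃ k ∈ KL, dyadicCube L k) + volume (A \ ⋃ k ∈ KL, dyadicCube L k) :=
          (measure_inter_add_diff A hUmeas).symm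
      _ = volume (⋃ k ∈ KL, A ∩ dyadicCube L k) := by
          rw [hAnull, add_zero, Set.inter_iUnion₂]
      _ = ∑ k ∈ KL, volume (A ∩ dyadicCube L k) := by
          refine measure_biUnion_finset ?_ fun k _ => hAmeas.inter (measurableSet_dyadicCube L k)
          exact fun a _ b _ hab =>
            Disjoint.mono Set.inter_subset_right Set.inter_subset_right (hdisj L a b hab)
  have hAQ1' : A ∩ dyadicCube 0 (fun _ : Fin N => 0) = A :=
    Set.inter_eq_self_of_subset_left hAQ1
  -- the stopping level is at most L
  have hPL : ∀ k : Fin N → ℕ, czBad A δ₁ L k → czP A δ₁ L k ≤ L := by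
    intro k h; have := (czP_stop h).1; omega
  -- the stopping cube is contained in B
  have hstopB : ∀ k : Fin N → ℕ, czBad A δ₁ L k →
      dyadicCube (czP A δ₁ L k) (czAnc L (czP A δ₁ L k) k) ⊆ B := by
    intro k hk
    obtain ⟨hPLk, r', hr'lt, hr'eq, hcross⟩ := czP_stop hk
    have := h2 (czP A δ₁ L k + 1) (Nat.le_add_left 1 _) hPLk r' hr'lt hcross
    simpa [hr'eq] using this
  -- the density at the stopping cube is at most δ₁
  have hstopdens : ∀ k : Fin N → ℕ, (∀ i, k i < 2 ^ L) → czBad A δ₁ L k →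
      volume (A ∩ dyadicCube (czP A δ₁ L k) (czAnc L (czP A δ₁ L k) k)) ≤
        ENNReal.ofReal δ₁ * volume (dyadicCube (czP A δ₁ L k) (czAnc L (czP A δ₁ L k) k)) := by
    intro k hk hbad
    rcases Nat.eq_zero_or_pos (czP A δ₁ L k) with hP0 | hPpos
    · rw [hP0]
      have hz : czAnc L 0 k = (fun _ : Fin N => 0) := by
        funext i; simp only [czAnc, Nat.sub_zero]; exact Nat.div_eq_of_lt (hk i)
      rw [hz, hAQ1', hQ1vol, mul_one]
      exact h1
    · by_contra hcon
      push_neg at hcon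
      set q := czP A δ₁ L k - 1 with hqdef
      have hPk : czP A δ₁ L k = q + 1 := by omega
      have hq1L : q + 1 + 1 ≤ L := by have := (czP_stop hbad).1; omega
      have hb : ∀ i, czAnc L (q + 1) k i < 2 ^ (q + 1) := by
        intro i
        simp only [czAnc]
        rw [Nat.div_lt_iff_lt_mul (Nat.pow_pos (by norm_num))]
        calc k i < 2 ^ L := hk i
          _ = 2 ^ (q + 1) * 2 ^ (L - (q + 1)) := by rw [← pow_add]; congr 1; omega
      have hpar : (fun i => czAnc L (q + 1) k i / 2) = czAnc L q k := by
        funext i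
        simp only [czAnc]
        rw [Nat.div_div_eq_div_mul, ← pow_succ]
        congr 2
        omega
      have hcross : czCross A δ₁ (q + 1) (czAnc L (q + 1) k) := by
        rw [← hPk]
        exact hcon
      exact czP_min hbad (by omega : q < czP A δ₁ L k)
        ⟨by omega, czAnc L (q + 1) k, hb, hpar, hcross⟩
  -- good cubes have density at most δ₁
  have hgooddens : ∀ k : Fin N → ℕ, (∀ i, k i < 2 ^ L) → ¬ czBad A δ₁ L k →
      volume (A ∩ dyadicCube L k) ≤ ENNReal.ofReal δ₁ * volume (dyadicCube L k) := by
    intro k hk hgood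
    rcases Nat.eq_zero_or_pos L with hL0 | hLpos
    · subst hL0
      have hk0 : k = (fun _ : Fin N => 0) := funext fun i => by have := hk i; omega
      rw [hk0, hAQ1', hQ1vol, mul_one]
      exact h1
    · by_contra hcon
      push_neg at hcon
      apply hgood
      refine ⟨L - 1, by omega, k, ?_, ?_, ?_⟩
      · intro i
        have he : L - 1 + 1 = L := by omega
        rw [he]; exact hk i
      · funext i
        simp only [czAnc]
        congr 1
        have : L - (L - 1) = 1 := by omega
        rw [this, pow_one]
      · show czCross A δ₁ (L - 1 + 1) k
        have he : L - 1 + 1 = L := by omega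
        rw [he]
        exact hcon
  -- cross-level membership
  have hanc_mem : ∀ (p p' : ℕ) (k : Fin N → ℕ), p ≤ p' → p' ≤ L →
      ∀ x : EuclideanSpace ℝ (Fin N),
      x ∈ dyadicCube p' (czAnc L p' k) → x ∈ dyadicCube p (czAnc L p k) := by
    intro p p' k hpp' hp'L x hx
    have h := dyadicCube_subset hpp' (czAnc L p' k) hx
    rwa [czAnc_trans L p p' hpp' hp'L k] at h
  -- if two assigned stopping cubes meet, they are equal
  have haux : ∀ k k' : Fin N → ℕ, czBad A δ₁ L k → czBad A δ₁ L k' →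
      czP A δ₁ L k ≤ czP A δ₁ L k' → ∀ x : EuclideanSpace ℝ (Fin N),
      x ∈ dyadicCube (czP A δ₁ L k) (czAnc L (czP A δ₁ L k) k) →
      x ∈ dyadicCube (czP A δ₁ L k') (czAnc L (czP A δ₁ L k') k') →
      czP A δ₁ L k = czP A δ₁ L k' ∧
        czAnc L (czP A δ₁ L k) k = czAnc L (czP A δ₁ L k') k' := by
    intro k k' hb hb' hPP x hx hx'
    have hx'' : x ∈ dyadicCube (czP A δ₁ L k) (czAnc L (czP A δ₁ L k) k') :=
      hanc_mem _ _ k' hPP (hPL k' hb') x hx'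
    have heq : czAnc L (czP A δ₁ L k) k' = czAnc L (czP A δ₁ L k) k :=
      dyadic_eq_of_mem hx'' hx
    have hstop' : czStop A δ₁ L (czP A δ₁ L k) (czAnc L (czP A δ₁ L k) k') := by
      rw [heq]; exact czP_stop hb
    have hle : czP A δ₁ L k' ≤ czP A δ₁ L k := czP_le hb' hstop'
    have hPeq : czP A δ₁ L k = czP A δ₁ L k' := le_antisymm hPP hle
    refine ⟨hPeq, ?_⟩
    rw [← hPeq]
    exact heq.symm
  -- a good cube cannot meet an assigned stopping cube
  have hgoodmeet : ∀ k k' : Fin N → ℕ, czBad A δ₁ L k → (∀ i, k' i < 2 ^ L) →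
      Disjoint (dyadicCube (czP A δ₁ L k) (czAnc L (czP A δ₁ L k) k)) (dyadicCube L k') ∨
      czBad A δ₁ L k' := by
    intro k k' hb hk'
    by_cases hd : Disjoint (dyadicCube (czP A δ₁ L k) (czAnc L (czP A δ₁ L k) k))
      (dyadicCube L k')
    · exact Or.inl hd
    · right
      rw [Set.not_disjoint_iff] at hd
      obtain ⟨x, hx, hx'⟩ := hd
      have hx2 : x ∈ dyadicCube (czP A δ₁ L k) (czAnc L (czP A δ₁ L k) k') := by
        refine hanc_mem _ L k' (hPL k hb) le_rfl x ?_
        rw [czAnc_self]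
        exact hx'
      have heq : czAnc L (czP A δ₁ L k) k' = czAnc L (czP A δ₁ L k) k :=
        dyadic_eq_of_mem hx2 hx
      exact ⟨czP A δ₁ L k, by rw [heq]; exact czP_stop hb⟩
  -- the finsets
  set T : (Fin N → ℕ) → ℕ × (Fin N → ℕ) :=
    fun k => (czP A δ₁ L k, czAnc L (czP A δ₁ L k) k) with hTdef
  set BadS : Finset (Fin N → ℕ) := KL.filter (czBad A δ₁ L) with hBadSdef
  set GoodS : Finset (Fin N → ℕ) := KL.filter (fun k => ¬ czBad A δ₁ L k) with hGoodSdef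
  set GB : Finset (Fin N → ℕ) := GoodS.filter (fun k => dyadicCube L k ⊆ B) with hGBdef
  set GN : Finset (Fin N → ℕ) := GoodS.filter (fun k => ¬ dyadicCube L k ⊆ B) with hGNdef
  set SS : Finset (ℕ × (Fin N → ℕ)) := BadS.image T with hSSdef
  have hBadS_mem : ∀ k ∈ BadS, k ∈ KL ∧ czBad A δ₁ L k := by
    intro k hk; exact Finset.mem_filter.1 hk
  have hSS_elim : ∀ pr ∈ SS, ∃ k, (k ∈ KL ∧ czBad A δ₁ L k) ∧ T k = pr := by
    intro pr hpr
    obtain ⟨k, hk, hTk⟩ := Finset.mem_image.1 hpr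
    exact ⟨k, hBadS_mem k hk, hTk⟩
  -- disjointness of distinct assigned cubes
  have hSSdisj : ∀ pr ∈ SS, ∀ pr' ∈ SS, pr ≠ pr' →
      Disjoint (dyadicCube pr.1 pr.2) (dyadicCube pr'.1 pr'.2) := by
    intro pr hpr pr' hpr' hne
    obtain ⟨k, ⟨hkKL, hbk⟩, hTk⟩ := hSS_elim pr hpr
    obtain ⟨k', ⟨hk'KL, hbk'⟩, hTk'⟩ := hSS_elim pr' hpr'
    rw [Set.disjoint_left]
    intro x hx hx'
    rw [← hTk] at hx hne
    rw [← hTk'] at hx' hne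
    simp only [hTdef] at hx hx' hne
    rcases le_total (czP A δ₁ L k) (czP A δ₁ L k') with h | h
    · obtain ⟨h1', h2'⟩ := haux k k' hbk hbk' h x hx hx'
      exact hne (Prod.ext_iff.mpr ⟨h1', h2'⟩)
    · obtain ⟨h1', h2'⟩ := haux k' k hbk' hbk h x hx' hx
      exact hne (Prod.ext_iff.mpr ⟨h1'.symm, h2'.symm⟩)
  -- assigned cubes are in B with small density
  have hSS_B : ∀ pr ∈ SS, dyadicCube pr.1 pr.2 ⊆ B := by
    intro pr hpr
    obtain ⟨k, ⟨hkKL, hbk⟩, hTk⟩ := hSS_elim pr hpr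
    rw [← hTk]
    exact hstopB k hbk
  have hSS_dens : ∀ pr ∈ SS,
      volume (A ∩ dyadicCube pr.1 pr.2) ≤ ENNReal.ofReal δ₁ * volume (dyadicCube pr.1 pr.2) := by
    intro pr hpr
    obtain ⟨k, ⟨hkKL, hbk⟩, hTk⟩ := hSS_elim pr hpr
    rw [← hTk]
    exact hstopdens k ((hKLmem k).1 hkKL) hbk
  have hSSlevel : ∀ pr ∈ SS, pr.1 < L := by
    intro pr hpr
    obtain ⟨k, ⟨hkKL, hbk⟩, hTk⟩ := hSS_elim pr hpr
    rw [← hTk]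
    have := (czP_stop hbk).1
    simp only [hTdef]
    omega
  -- assigned cubes are disjoint from good cubes
  have hSS_good : ∀ pr ∈ SS, ∀ k' ∈ GoodS, Disjoint (dyadicCube pr.1 pr.2) (dyadicCube L k') := by
    intro pr hpr k' hk'
    obtain ⟨k, ⟨hkKL, hbk⟩, hTk⟩ := hSS_elim pr hpr
    obtain ⟨hk'KL, hk'good⟩ := Finset.mem_filter.1 hk'
    rw [← hTk]
    rcases hgoodmeet k k' hbk ((hKLmem k').1 hk'KL) with hd | hbad
    · exact hd
    · exact absurd hbad hk'good
  -- the combined family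
  set GBi : Finset (ℕ × (Fin N → ℕ)) := GB.image (fun k => (L, k)) with hGBidef
  have hGBi_elim : ∀ pr ∈ GBi, ∃ k ∈ GB, (L, k) = pr := by
    intro pr hpr
    obtain ⟨k, hk, hTk⟩ := Finset.mem_image.1 hpr
    exact ⟨k, hk, hTk⟩
  have hFdisjF : Disjoint SS GBi := by
    rw [Finset.disjoint_left]
    intro pr hpr hpr'
    obtain ⟨k, hk, hTk⟩ := hGBi_elim pr hpr'
    have := hSSlevel pr hpr
    rw [← hTk] at this
    simp at this
  set F : Finset (ℕ × (Fin N → ℕ)) := SS ∪ GBi with hFdef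
  have hFB : ∀ pr ∈ F, dyadicCube pr.1 pr.2 ⊆ B := by
    intro pr hpr
    rcases Finset.mem_union.1 hpr with h | h
    · exact hSS_B pr h
    · obtain ⟨k, hk, hTk⟩ := hGBi_elim pr h
      rw [← hTk]
      exact (Finset.mem_filter.1 hk).2
  have hFdisj : (F : Set (ℕ × (Fin N → ℕ))).PairwiseDisjoint
      (fun pr => dyadicCube pr.1 pr.2) := by
    intro pr hpr pr' hpr' hne
    rw [Finset.mem_coe] at hpr hpr'
    rcases Finset.mem_union.1 hpr with h | h <;> rcases Finset.mem_union.1 hpr' with h' | h'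
    · exact hSSdisj pr h pr' h' hne
    · obtain ⟨k', hk', hTk'⟩ := hGBi_elim pr' h'
      rw [← hTk']
      exact hSS_good pr h k' (Finset.mem_of_mem_filter k' hk')
    · obtain ⟨k, hk, hTk⟩ := hGBi_elim pr h
      rw [← hTk]
      exact (hSS_good pr' h' k (Finset.mem_of_mem_filter k hk)).symm
    · obtain ⟨k, hk, hTk⟩ := hGBi_elim pr h
      obtain ⟨k', hk', hTk'⟩ := hGBi_elim pr' h'
      rw [← hTk, ← hTk']
      refine hdisj L k k' fun hkk' => hne ?_
      rw [← hTk, ← hTk', hkk']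
  have hFvol : ∑ pr ∈ F, volume (dyadicCube pr.1 pr.2) ≤ volume B := by
    rw [← measure_biUnion_finset hFdisj (fun pr _ => measurableSet_dyadicCube _ _)]
    exact measure_mono (Set.iUnion₂_subset hFB)
  -- splitting the sum
  have hsplit : volume A = (∑ k ∈ BadS, volume (A ∩ dyadicCube L k)) +
      ((∑ k ∈ GB, volume (A ∩ dyadicCube L k)) + (∑ k ∈ GN, volume (A ∩ dyadicCube L k))) := by
    rw [key]
    rw [← Finset.sum_filter_add_sum_filter_not KL (czBad A δ₁ L)
      (fun k => volume (A ∩ dyadicCube L k))]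
    congr 1
    rw [← Finset.sum_filter_add_sum_filter_not GoodS (fun k => dyadicCube L k ⊆ B)
      (fun k => volume (A ∩ dyadicCube L k))]
  -- the bad sum
  have hbadsum : ∑ k ∈ BadS, volume (A ∩ dyadicCube L k) ≤
      ∑ pr ∈ SS, ENNReal.ofReal δ₁ * volume (dyadicCube pr.1 pr.2) := by
    rw [← Finset.sum_fiberwise_of_maps_to (fun k hk => Finset.mem_image_of_mem T hk)
      (fun k => volume (A ∩ dyadicCube L k))]
    apply Finset.sum_le_sum
    intro pr hpr
    have hstep : ∑ k ∈ BadS.filter (fun k => T k = pr), volume (A ∩ dyadicCube L k) =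
        volume (⋃ k ∈ BadS.filter (fun k => T k = pr), (A ∩ dyadicCube L k)) := by
      refine (measure_biUnion_finset ?_
        (fun k _ => hAmeas.inter (measurableSet_dyadicCube L k))).symm
      exact fun a _ b _ hab =>
        Disjoint.mono Set.inter_subset_right Set.inter_subset_right (hdisj L a b hab)
    rw [hstep]
    have hsub : (⋃ k ∈ BadS.filter (fun k => T k = pr), (A ∩ dyadicCube L k)) ⊆
        A ∩ dyadicCube pr.1 pr.2 := by
      refine Set.iUnion₂_subset fun k hk => ?_
      obtain ⟨hkB, hTk⟩ := Finset.mem_filter.1 hk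
      obtain ⟨hkKL, hbk⟩ := hBadS_mem k hkB
      refine Set.inter_subset_inter_right A ?_
      have h1 : dyadicCube L k ⊆
          dyadicCube (czP A δ₁ L k) (czAnc L (czP A δ₁ L k) k) :=
        dyadicCube_subset (hPL k hbk) k
      rw [← hTk]
      simpa only [hTdef] using h1
    calc volume (⋃ k ∈ BadS.filter (fun k => T k = pr), (A ∩ dyadicCube L k))
        ≤ volume (A ∩ dyadicCube pr.1 pr.2) := measure_mono hsub
      _ ≤ ENNReal.ofReal δ₁ * volume (dyadicCube pr.1 pr.2) := hSS_dens pr hpr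
  -- the good-in-B sum
  have hgbsum : ∑ k ∈ GB, volume (A ∩ dyadicCube L k) ≤
      ∑ k ∈ GB, ENNReal.ofReal δ₁ * volume (dyadicCube L k) := by
    apply Finset.sum_le_sum
    intro k hk
    obtain ⟨hkG, _⟩ := Finset.mem_filter.1 hk
    obtain ⟨hkKL, hkgood⟩ := Finset.mem_filter.1 hkG
    exact hgooddens k ((hKLmem k).1 hkKL) hkgood
  -- the good-not-in-B sum
  have hgnsum : ∑ k ∈ GN, volume (A ∩ dyadicCube L k) ≤ ENNReal.ofReal δ₂ := by
    have hstep : ∑ k ∈ GN, volume (A ∩ dyadicCube L k) ≤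
        ∑ k ∈ GN, ENNReal.ofReal δ₂ * volume (dyadicCube L k) := by
      apply Finset.sum_le_sum
      intro k hk
      obtain ⟨hkG, hknot⟩ := Finset.mem_filter.1 hk
      obtain ⟨hkKL, _⟩ := Finset.mem_filter.1 hkG
      rcases le_or_gt (volume (A ∩ dyadicCube L k))
        (ENNReal.ofReal δ₂ * volume (dyadicCube L k)) with h | h
      · exact h
      · exact absurd (h3 k ((hKLmem k).1 hkKL) h) hknot
    calc ∑ k ∈ GN, volume (A ∩ dyadicCube L k)
        ≤ ∑ k ∈ GN, ENNReal.ofReal δ₂ * volume (dyadicCube L k) := hstep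
      _ = ENNReal.ofReal δ₂ * ∑ k ∈ GN, volume (dyadicCube L k) := by
          rw [Finset.mul_sum]
      _ ≤ ENNReal.ofReal δ₂ * ∑ k ∈ KL, volume (dyadicCube L k) := by
          gcongr
          intro k hk
          exact Finset.mem_of_mem_filter k (Finset.mem_of_mem_filter k hk)
      _ = ENNReal.ofReal δ₂ := by rw [hsumKL, mul_one]
  -- combining the B-sums
  have hcomb : (∑ pr ∈ SS, ENNReal.ofReal δ₁ * volume (dyadicCube pr.1 pr.2)) +
      (∑ k ∈ GB, ENNReal.ofReal δ₁ * volume (dyadicCube L k)) ≤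
      ENNReal.ofReal δ₁ * volume B := by
    have hinj : ∀ a ∈ GB, ∀ b ∈ GB, ((L, a) : ℕ × (Fin N → ℕ)) = (L, b) → a = b :=
      fun a _ b _ hab => congrArg Prod.snd hab
    have hGBsum_eq : ∑ pr ∈ GBi, ENNReal.ofReal δ₁ * volume (dyadicCube pr.1 pr.2) =
        ∑ k ∈ GB, ENNReal.ofReal δ₁ * volume (dyadicCube L k) := by
      rw [hGBidef]
      exact Finset.sum_image hinj
    rw [← hGBsum_eq, ← Finset.sum_union hFdisjF, ← hFdef, ← Finset.mul_sum]
    exact mul_le_mul_right hFvol _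
  -- conclusion
  calc volume A = (∑ k ∈ BadS, volume (A ∩ dyadicCube L k)) +
      ((∑ k ∈ GB, volume (A ∩ dyadicCube L k)) + (∑ k ∈ GN, volume (A ∩ dyadicCube L k))) :=
        hsplit
    _ ≤ (∑ pr ∈ SS, ENNReal.ofReal δ₁ * volume (dyadicCube pr.1 pr.2)) +
        ((∑ k ∈ GB, ENNReal.ofReal δ₁ * volume (dyadicCube L k)) + ENNReal.ofReal δ₂) :=
        add_le_add hbadsum (add_le_add hgbsum hgnsum)
    _ = ((∑ pr ∈ SS, ENNReal.ofReal δ₁ * volume (dyadicCube pr.1 pr.2)) +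
        (∑ k ∈ GB, ENNReal.ofReal δ₁ * volume (dyadicCube L k))) + ENNReal.ofReal δ₂ := by
        ring
    _ ≤ ENNReal.ofReal δ₁ * volume B + ENNReal.ofReal δ₂ := add_le_add_left hcomb _
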